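/- arXiv:1302.0793 — 2 statements merged into one kernel-verified Lean document; each statement's English description precedes it below -/
import Mathlib

section
/- For any real numbers V₀, V_j, any D > 0, and any h₁, h₂, h_j > 0, the non-uniform jump rates a_{0j} = (2D/(h_j(h₁+h₂)))·A(V_j − V₀) and a_{j0} = (D/h_j²)·A(V₀ − V_j) satisfy the discrete detailed balance relation a_{0j}·exp(−V₀)·(h₁+h₂)/2 = a_{j0}·exp(−V_j)·h_j. -/
open Real

/-- The Wang–Peskin–Elston weight function: `A(u) = u / (exp u - 1)` for `u ≠ 0`,
and `A(0) = 1`. -/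
noncomputable def wpeA (u : ℝ) : ℝ :=
  if u = 0 then 1 else u / (Real.exp u - 1)

lemma wpeA_key (a b : ℝ) : wpeA (b - a) * Real.exp (-a) = wpeA (a - b) * Real.exp (-b) := by
  unfold wpeA
  by_cases h : b - a = 0
  · have hab : a = b := by linarith [sub_eq_zero.mp h]
    simp [h, hab, sub_eq_zero]
  · have h' : a - b ≠ 0 := fun hc => h (by linarith [sub_eq_zero.mp hc])
    rw [if_neg h, if_neg h']
    have hne : Real.exp b - Real.exp a ≠ 0 := by
      intro hc
      exact h (sub_eq_zero.mpr (Real.exp_injective (sub_eq_zero.mp hc)))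
    have e1 : Real.exp (b - a) * Real.exp a = Real.exp b := by
      rw [← Real.exp_add]; ring_nf
    have e2 : Real.exp (a - b) * Real.exp b = Real.exp a := by
      rw [← Real.exp_add]; ring_nf
    have h1 : Real.exp (b - a) - 1 ≠ 0 := by
      intro hc
      have : Real.exp (b - a) = 1 := by linarith
      apply hne
      rw [← e1, this]; ring
    have h2 : Real.exp (a - b) - 1 ≠ 0 := by
      intro hc
      have : Real.exp (a - b) = 1 := by linarith
      apply hne
      rw [← e2, this]; ring
    have ea := (Real.exp_pos a).ne'
    have eb := (Real.exp_pos b).ne'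
    rw [Real.exp_neg, Real.exp_neg]
    field_simp
    linear_combination (b - a) * e2 - (a - b) * e1

/-- Discrete detailed balance for the non-uniform jump rates:
`a_{0j} = (2D/(h_j(h₁+h₂))) A(V_j - V₀)` and `a_{j0} = (D/h_j²) A(V₀ - V_j)` satisfy
`a_{0j} exp(-V₀) (h₁+h₂)/2 = a_{j0} exp(-V_j) h_j`. -/
theorem wpe_nonuniform_detailed_balance (V0 Vj D h1 h2 hj : ℝ)
    (hD : 0 < D) (hh1 : 0 < h1) (hh2 : 0 < h2) (hhj : 0 < hj) :
    (2 * D / (hj * (h1 + h2)) * wpeA (Vj - V0)) * Real.exp (-V0) * ((h1 + h2) / 2)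
      = (D / hj ^ 2 * wpeA (V0 - Vj)) * Real.exp (-Vj) * hj := by
  have key := wpeA_key V0 Vj
  have h12 : h1 + h2 > 0 := by linarith
  field_simp
  linear_combination key
end

section
/- Let ρ, V : ℝ → ℝ be twice continuously differentiable, let D > 0, and fix x₀ ∈ ℝ. Then as (h₁, h₂) → (0⁺, 0⁺) (with no constraint on the ratio h₁/h₂), the non-uniform Wang–Peskin–Elston operator (2/(h₁+h₂))·[ (D/h₂)·( A(V(x₀) − V(x₀+h₂))·ρ(x₀+h₂) − A(V(x₀+h₂) − V(x₀))·ρ(x₀) ) − (D/h₁)·( A(V(x₀−h₁) − V(x₀))·ρ(x₀) − A(V(x₀) − V(x₀−h₁))·ρ(x₀−h₁) ) ] converges to D·(ρ''(x₀) + ρ'(x₀)·V'(x₀) + ρ(x₀)·V''(x₀)); i.e., the non-uniform discretization of the Fokker–Planck equation is consistent. -/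
open Real Filter Set

lemma exp_ne (s : ℝ) (hs : s ≠ 0) : Real.exp s - 1 ≠ 0 := by
  intro h
  apply hs
  have : Real.exp s = Real.exp 0 := by rw [Real.exp_zero]; linarith
  exact Real.exp_injective this

lemma wpeA_neg (u : ℝ) : wpeA (-u) = wpeA u + u := by
  rcases eq_or_ne u 0 with h | h
  · simp [h, wpeA]
  · have h1 := exp_ne u h
    have h2 := exp_ne (-u) (neg_ne_zero.mpr h)
    rw [wpeA, wpeA, if_neg (neg_ne_zero.mpr h), if_neg h]
    have he : Real.exp (-u) = (Real.exp u)⁻¹ := Real.exp_neg u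
    have hep : Real.exp u ≠ 0 := (Real.exp_pos u).ne'
    have hden : Real.exp (-u) - 1 = -(Real.exp u - 1) / Real.exp u := by
      rw [he]; field_simp; ring
    rw [hden, div_div_eq_mul_div]
    rw [div_add' _ _ _ h1, div_eq_div_iff (by simpa [hden] using h2) h1]
    ring

/-- second-order Taylor bound for exp -/
lemma exp_quad : Tendsto (fun s : ℝ => (Real.exp s - 1 - s) / s ^ 2)
    (nhdsWithin 0 ({0}ᶜ)) (nhds (1 / 2)) := by
  rw [Metric.tendsto_nhdsWithin_nhds]
  intro ε εpos
  refine ⟨min 1 (ε * 9 / 4), by positivity, ?_⟩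
  intro s hs hds
  have hs0 : s ≠ 0 := hs
  rw [Real.dist_eq, sub_zero] at hds
  have habs1 : |s| ≤ 1 := le_of_lt (lt_of_lt_of_le hds (min_le_left _ _))
  have hb := Real.exp_bound habs1 (n := 3) (by norm_num)
  have hsum : ∑ m ∈ Finset.range 3, s ^ m / m.factorial = 1 + s + s ^ 2 / 2 := by
    simp [Finset.sum_range_succ, Nat.factorial]
  rw [hsum] at hb
  have hb2 : |Real.exp s - (1 + s + s ^ 2 / 2)| ≤ |s| ^ 3 * (2 / 9) := by
    convert hb using 2
    norm_num [Nat.factorial]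
  have hs2 : (0:ℝ) < s ^ 2 := by positivity
  rw [Real.dist_eq]
  have key : (Real.exp s - 1 - s) / s ^ 2 - 1 / 2
      = (Real.exp s - (1 + s + s ^ 2 / 2)) / s ^ 2 := by
    field_simp
    ring
  rw [key, abs_div, abs_of_pos hs2]
  calc |Real.exp s - (1 + s + s ^ 2 / 2)| / s ^ 2 ≤ |s| ^ 3 * (2 / 9) / s ^ 2 := by
        exact div_le_div_of_nonneg_right hb2 hs2.le
    _ = |s| * (2 / 9) := by
        field_simp
        exact sq_abs s
    _ < ε := by
        have : |s| < ε * 9 / 4 := lt_of_lt_of_le hds (min_le_right _ _)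
        nlinarith [abs_nonneg s]

noncomputable def wpeG (s : ℝ) : ℝ := if s = 0 then -(1/2) else (wpeA s - 1) / s

lemma wpeA_eq (s : ℝ) : wpeA s = 1 + s * wpeG s := by
  rcases eq_or_ne s 0 with h | h
  · simp [h, wpeA, wpeG]
  · rw [wpeG, if_neg h]
    field_simp
    ring

lemma wpeG_tendsto : Tendsto wpeG (nhds 0) (nhds (-(1/2))) := by
  rw [← nhdsNE_sup_pure]
  rw [tendsto_sup]
  constructor
  · -- on s ≠ 0
    have hA : Tendsto (fun s : ℝ => wpeA s) (nhdsWithin 0 ({0}ᶜ)) (nhds 1) := by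
      have h1 : Tendsto (fun s : ℝ => (Real.exp s - 1) / s) (nhdsWithin 0 ({0}ᶜ)) (nhds 1) := by
        have : HasDerivAt Real.exp 1 0 := by simpa using Real.hasDerivAt_exp 0
        have h3 := hasDerivAt_iff_tendsto_slope.mp this
        apply h3.congr'
        filter_upwards [self_mem_nhdsWithin] with s hs
        have hs0 : s ≠ 0 := hs
        simp [slope_def_field]
      have h2 : Tendsto (fun s : ℝ => ((Real.exp s - 1) / s)⁻¹) (nhdsWithin 0 ({0}ᶜ))
          (nhds 1⁻¹) := h1.inv₀ (by norm_num)
      rw [inv_one] at h2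
      apply h2.congr'
      filter_upwards [self_mem_nhdsWithin] with s hs
      have hs0 : s ≠ 0 := hs
      rw [wpeA, if_neg hs0]
      rw [inv_div]
    have hcomb : Tendsto (fun s : ℝ => -((Real.exp s - 1 - s) / s ^ 2) * wpeA s)
        (nhdsWithin 0 ({0}ᶜ)) (nhds (-(1/2) * 1)) := (exp_quad.neg).mul hA
    rw [mul_one] at hcomb
    apply hcomb.congr'
    filter_upwards [self_mem_nhdsWithin] with s hs
    have hs0 : s ≠ 0 := hs
    have h1 := exp_ne s hs0
    rw [wpeG, if_neg hs0, wpeA, if_neg hs0]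
    field_simp
    ring
  · have h0 : wpeG 0 = -(1/2) := by simp [wpeG]
    rw [show (-(1/2) : ℝ) = wpeG 0 from h0.symm]
    exact tendsto_pure_nhds wpeG 0

lemma slope2_right (f : ℝ → ℝ) (hf : ContDiff ℝ 2 f) (x₀ : ℝ) :
    Tendsto (fun h : ℝ => ((f (x₀ + h) - f x₀) / h - deriv f x₀) / h)
      (nhdsWithin 0 (Set.Ioi 0)) (nhds (deriv (deriv f) x₀ / 2)) := by
  have hdiff : Differentiable ℝ f := hf.differentiable (by norm_num)
  have hd1 : ContDiff ℝ 1 (deriv f) := by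
    have := (contDiff_succ_iff_deriv (n := 1)).mp (by exact_mod_cast hf)
    exact this.2.2
  have hdd : Differentiable ℝ (deriv f) := hd1.differentiable one_ne_zero
  have hcont2 : Continuous (deriv (deriv f)) := (contDiff_one_iff_deriv.mp hd1).2
  -- key: for 0 < h, exists ξ ∈ Ioo x₀ (x₀+h) with value = deriv (deriv f) ξ / 2
  have key : ∀ h : ℝ, 0 < h → ∃ ξ ∈ Ioo x₀ (x₀ + h),
      ((f (x₀ + h) - f x₀) / h - deriv f x₀) / h = deriv (deriv f) ξ / 2 := by
    intro h hh
    have hx : x₀ < x₀ + h := by linarith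
    have hud : UniqueDiffOn ℝ (Icc x₀ (x₀ + h)) := uniqueDiffOn_Icc hx
    have hfc : ContDiffOn ℝ 1 f (Icc x₀ (x₀ + h)) :=
      (hf.of_le (by norm_num)).contDiffOn
    have heq1 : ∀ y ∈ Ioo x₀ (x₀ + h),
        iteratedDerivWithin 1 f (Icc x₀ (x₀ + h)) y = deriv f y := by
      intro y hy
      have hmem : Icc x₀ (x₀ + h) ∈ nhds y :=
        Icc_mem_nhds hy.1 hy.2
      rw [iteratedDerivWithin_one,
        derivWithin_of_mem_nhds hmem]
    have hf' : DifferentiableOn ℝ (iteratedDerivWithin 1 f (Icc x₀ (x₀ + h)))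
        (Ioo x₀ (x₀ + h)) := by
      apply DifferentiableOn.congr (f := deriv f)
      · exact (hdd.differentiableOn)
      · exact heq1
    obtain ⟨ξ, hξ, hval⟩ := taylor_mean_remainder_lagrange (n := 1) (x := x₀ + h) (x₀ := x₀)
      hx.ne (by rw [uIcc_of_le hx.le]; exact hfc)
      (by rw [uIcc_of_le hx.le, uIoo_of_le hx.le]; exact hf')
    rw [uIoo_of_le hx.le] at hξ
    rw [uIcc_of_le hx.le] at hval
    refine ⟨ξ, hξ, ?_⟩
    -- simplify taylorWithinEval
    have htay : taylorWithinEval f 1 (Icc x₀ (x₀ + h)) x₀ (x₀ + h)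
        = f x₀ + deriv f x₀ * h := by
      rw [taylorWithinEval_succ, taylor_within_zero_eval]
      rw [iteratedDerivWithin_one]
      rw [(hdiff x₀).derivWithin (hud x₀ (left_mem_Icc.mpr hx.le))]
      simp [Nat.factorial, smul_eq_mul, mul_comm]
    have h2 : iteratedDerivWithin (1 + 1) f (Icc x₀ (x₀ + h)) ξ = deriv (deriv f) ξ := by
      rw [iteratedDerivWithin_succ]
      rw [derivWithin_of_mem_nhds (Icc_mem_nhds hξ.1 hξ.2)]
      have : (fun y => iteratedDerivWithin 1 f (Icc x₀ (x₀ + h)) y)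
          =ᶠ[nhds ξ] deriv f := by
        filter_upwards [isOpen_Ioo.mem_nhds hξ] with y hy using heq1 y hy
      rw [this.deriv_eq]
    rw [htay, h2] at hval
    have hfact : ((1 + 1 : ℕ).factorial : ℝ) = 2 := by norm_num [Nat.factorial]
    rw [hfact, add_sub_cancel_left] at hval
    have hh' : h ≠ 0 := ne_of_gt hh
    have expand : ((f (x₀ + h) - f x₀) / h - deriv f x₀) / h
        = (f (x₀ + h) - (f x₀ + deriv f x₀ * h)) / h ^ 2 := by
      field_simp
      ring
    rw [expand, hval]
    field_simp
  -- now epsilon-delta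
  rw [Metric.tendsto_nhdsWithin_nhds]
  intro ε εpos
  obtain ⟨δ, δpos, hδ⟩ := Metric.continuousAt_iff.mp (hcont2.continuousAt (x := x₀)) ε εpos
  refine ⟨δ, δpos, ?_⟩
  intro h hmem hdist
  obtain ⟨ξ, hξ, hval⟩ := key h hmem
  rw [hval]
  have hξd : dist ξ x₀ < δ := by
    rw [Real.dist_eq, sub_zero] at hdist
    rw [Real.dist_eq]
    rw [abs_of_pos hmem] at hdist
    rw [abs_lt]
    constructor <;> [linarith [hξ.1]; linarith [hξ.2]]
  have := hδ hξd
  rw [Real.dist_eq] at this ⊢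
  rw [div_sub_div_same, abs_div]
  rw [abs_of_pos (by norm_num : (0:ℝ) < 2)]
  linarith

lemma sideP (ρ V : ℝ → ℝ) (hρ : ContDiff ℝ 2 ρ) (hV : ContDiff ℝ 2 V) (x₀ : ℝ) :
    Tendsto (fun h : ℝ =>
      ((wpeA (V x₀ - V (x₀ + h)) * ((ρ (x₀ + h) - ρ x₀) / h)
          + ρ x₀ * ((V (x₀ + h) - V x₀) / h))
        - (deriv ρ x₀ + ρ x₀ * deriv V x₀)) / h)
      (nhdsWithin 0 (Set.Ioi 0))
      (nhds ((deriv (deriv ρ) x₀ + deriv ρ x₀ * deriv V x₀ + ρ x₀ * deriv (deriv V) x₀) / 2)) := by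
  have t1 := slope2_right ρ hρ x₀
  have t2 := slope2_right V hV x₀
  have tid : Tendsto (fun h : ℝ => h) (nhdsWithin 0 (Set.Ioi 0)) (nhds 0) :=
    tendsto_id.mono_left nhdsWithin_le_nhds
  have tgp : Tendsto (fun h : ℝ => (ρ (x₀ + h) - ρ x₀) / h)
      (nhdsWithin 0 (Set.Ioi 0)) (nhds (deriv ρ x₀)) := by
    have := tendsto_const_nhds (x := deriv ρ x₀)
        (f := nhdsWithin (0:ℝ) (Set.Ioi 0)) |>.add (tid.mul t1)
    rw [mul_comm] at this
    simp only [zero_mul, mul_zero, add_zero] at this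
    apply this.congr'
    filter_upwards [self_mem_nhdsWithin] with h hh
    have h0 : h ≠ 0 := ne_of_gt hh
    field_simp
    ring
  have tvp : Tendsto (fun h : ℝ => (V (x₀ + h) - V x₀) / h)
      (nhdsWithin 0 (Set.Ioi 0)) (nhds (deriv V x₀)) := by
    have := tendsto_const_nhds (x := deriv V x₀)
        (f := nhdsWithin (0:ℝ) (Set.Ioi 0)) |>.add (tid.mul t2)
    rw [mul_comm] at this
    simp only [zero_mul, mul_zero, add_zero] at this
    apply this.congr'
    filter_upwards [self_mem_nhdsWithin] with h hh
    have h0 : h ≠ 0 := ne_of_gt hh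
    field_simp
    ring
  have ts : Tendsto (fun h : ℝ => V x₀ - V (x₀ + h)) (nhdsWithin 0 (Set.Ioi 0)) (nhds 0) := by
    have : Tendsto (fun h : ℝ => V x₀ - V (x₀ + h)) (nhds 0) (nhds (V x₀ - V (x₀ + 0))) := by
      apply Tendsto.sub tendsto_const_nhds
      exact (hV.continuous.tendsto _).comp (by
        exact (continuous_const.add continuous_id).tendsto 0)
    simpa using this.mono_left nhdsWithin_le_nhds
  have tG : Tendsto (fun h : ℝ => wpeG (V x₀ - V (x₀ + h)))
      (nhdsWithin 0 (Set.Ioi 0)) (nhds (-(1/2))) := wpeG_tendsto.comp ts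
  -- the decomposed limit
  have tmain : Tendsto (fun h : ℝ =>
      ((ρ (x₀ + h) - ρ x₀) / h - deriv ρ x₀) / h
        + (-((V (x₀ + h) - V x₀) / h)) * wpeG (V x₀ - V (x₀ + h)) * ((ρ (x₀ + h) - ρ x₀) / h)
        + ρ x₀ * (((V (x₀ + h) - V x₀) / h - deriv V x₀) / h))
      (nhdsWithin 0 (Set.Ioi 0))
      (nhds (deriv (deriv ρ) x₀ / 2
        + (-(deriv V x₀)) * (-(1/2)) * deriv ρ x₀
        + ρ x₀ * (deriv (deriv V) x₀ / 2))) :=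
    (t1.add ((tvp.neg.mul tG).mul tgp)).add (tendsto_const_nhds.mul t2)
  have : (deriv (deriv ρ) x₀ / 2 + (-(deriv V x₀)) * (-(1/2)) * deriv ρ x₀
      + ρ x₀ * (deriv (deriv V) x₀ / 2))
      = (deriv (deriv ρ) x₀ + deriv ρ x₀ * deriv V x₀ + ρ x₀ * deriv (deriv V) x₀) / 2 := by
    ring
  rw [this] at tmain
  apply tmain.congr'
  filter_upwards [self_mem_nhdsWithin] with h hh
  have h0 : h ≠ 0 := ne_of_gt hh
  have hs : V x₀ - V (x₀ + h) = -(h * ((V (x₀ + h) - V x₀) / h)) := by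
    field_simp
    ring
  rw [wpeA_eq (V x₀ - V (x₀ + h))]
  nth_rewrite 1 [hs]
  field_simp
  ring

lemma refl_contDiff (f : ℝ → ℝ) (hf : ContDiff ℝ 2 f) (x₀ : ℝ) :
    ContDiff ℝ 2 (fun x => f (2 * x₀ - x)) :=
  hf.comp (ContDiff.sub contDiff_const contDiff_id)

lemma refl_deriv (f : ℝ → ℝ) (hf : ContDiff ℝ 2 f) (x₀ : ℝ) :
    deriv (fun x => f (2 * x₀ - x)) x₀ = -deriv f x₀ := by
  have hdiff : Differentiable ℝ f := hf.differentiable (by norm_num)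
  have h1 : HasDerivAt (fun x : ℝ => 2 * x₀ - x) (-1) x₀ := by
    simpa using (hasDerivAt_id' x₀).const_sub (2 * x₀)
  have h2 : HasDerivAt (fun x => f (2 * x₀ - x)) (deriv f (2 * x₀ - x₀) * (-1)) x₀ :=
    (hdiff.differentiableAt.hasDerivAt (x := 2 * x₀ - x₀)).comp x₀ h1
  rw [h2.deriv, show 2 * x₀ - x₀ = x₀ from by ring]
  ring

lemma refl_deriv2 (f : ℝ → ℝ) (hf : ContDiff ℝ 2 f) (x₀ : ℝ) :
    deriv (deriv (fun x => f (2 * x₀ - x))) x₀ = deriv (deriv f) x₀ := by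
  have hdiff : Differentiable ℝ f := hf.differentiable (by norm_num)
  have hd1 : ContDiff ℝ 1 (deriv f) := by
    have := (contDiff_succ_iff_deriv (n := 1)).mp (by exact_mod_cast hf)
    exact this.2.2
  have hdd : Differentiable ℝ (deriv f) := hd1.differentiable one_ne_zero
  have hderivg : deriv (fun x => f (2 * x₀ - x)) = fun x => -deriv f (2 * x₀ - x) := by
    funext x
    have h1 : HasDerivAt (fun x : ℝ => 2 * x₀ - x) (-1) x := by
      simpa using (hasDerivAt_id' x).const_sub (2 * x₀)
    have h2 : HasDerivAt (fun x => f (2 * x₀ - x)) (deriv f (2 * x₀ - x) * (-1)) x :=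
      (hdiff.differentiableAt.hasDerivAt (x := 2 * x₀ - x)).comp x h1
    simpa [mul_comm] using h2.deriv
  rw [hderivg]
  have h1 : HasDerivAt (fun x : ℝ => 2 * x₀ - x) (-1) x₀ := by
    simpa using (hasDerivAt_id' x₀).const_sub (2 * x₀)
  have h2 : HasDerivAt (fun x => -deriv f (2 * x₀ - x))
      (-(deriv (deriv f) (2 * x₀ - x₀) * (-1))) x₀ :=
    (((hdd.differentiableAt (x := 2 * x₀ - x₀)).hasDerivAt).comp x₀ h1).neg
  rw [h2.deriv, show 2 * x₀ - x₀ = x₀ from by ring]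
  ring

lemma sideM (ρ V : ℝ → ℝ) (hρ : ContDiff ℝ 2 ρ) (hV : ContDiff ℝ 2 V) (x₀ : ℝ) :
    Tendsto (fun h : ℝ =>
      ((wpeA (V x₀ - V (x₀ - h)) * ((ρ x₀ - ρ (x₀ - h)) / h)
          + ρ x₀ * ((V x₀ - V (x₀ - h)) / h))
        - (deriv ρ x₀ + ρ x₀ * deriv V x₀)) / h)
      (nhdsWithin 0 (Set.Ioi 0))
      (nhds (-((deriv (deriv ρ) x₀ + deriv ρ x₀ * deriv V x₀
        + ρ x₀ * deriv (deriv V) x₀) / 2))) := by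
  have key := sideP (fun x => ρ (2 * x₀ - x)) (fun x => V (2 * x₀ - x))
    (refl_contDiff ρ hρ x₀) (refl_contDiff V hV x₀) x₀
  simp only [refl_deriv ρ hρ x₀, refl_deriv V hV x₀, refl_deriv2 ρ hρ x₀,
    refl_deriv2 V hV x₀] at key
  have hmid : ∀ h : ℝ, 2 * x₀ - (x₀ + h) = x₀ - h := fun h => by ring
  have hself : 2 * x₀ - x₀ = x₀ := by ring
  simp only [hmid, hself] at key
  have key2 := key.neg
  have hval : -((deriv (deriv ρ) x₀ + -deriv ρ x₀ * -deriv V x₀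
      + ρ x₀ * deriv (deriv V) x₀) / 2)
      = -((deriv (deriv ρ) x₀ + deriv ρ x₀ * deriv V x₀ + ρ x₀ * deriv (deriv V) x₀) / 2) := by
    ring
  rw [hval] at key2
  apply key2.congr
  intro h
  ring

/-- Consistency of the non-uniform Wang–Peskin–Elston discretization: for `ρ, V` twice
continuously differentiable and `D > 0`, as `(h₁, h₂) → (0⁺, 0⁺)` (no constraint on the
ratio `h₁/h₂`) the non-uniform flux-difference operator converges to
`D (ρ'' + ρ' V' + ρ V'')(x₀)`. -/
theorem wpe_nonuniform_consistency (ρ V : ℝ → ℝ)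
    (hρ : ContDiff ℝ 2 ρ) (hV : ContDiff ℝ 2 V) (D : ℝ) (hD : 0 < D) (x₀ : ℝ) :
    Tendsto
      (fun p : ℝ × ℝ =>
        2 / (p.1 + p.2) *
          (D / p.2 *
              (wpeA (V x₀ - V (x₀ + p.2)) * ρ (x₀ + p.2)
                - wpeA (V (x₀ + p.2) - V x₀) * ρ x₀)
            - D / p.1 *
              (wpeA (V (x₀ - p.1) - V x₀) * ρ x₀
                - wpeA (V x₀ - V (x₀ - p.1)) * ρ (x₀ - p.1))))
      ((nhdsWithin (0 : ℝ) (Set.Ioi 0)) ×ˢ (nhdsWithin (0 : ℝ) (Set.Ioi 0)))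
      (nhds (D * (deriv (deriv ρ) x₀ + deriv ρ x₀ * deriv V x₀ + ρ x₀ * deriv (deriv V) x₀))) := by
  set L : ℝ := deriv ρ x₀ + ρ x₀ * deriv V x₀ with hL
  set M : ℝ := deriv (deriv ρ) x₀ + deriv ρ x₀ * deriv V x₀ + ρ x₀ * deriv (deriv V) x₀ with hM
  set F := (nhdsWithin (0 : ℝ) (Set.Ioi 0)) ×ˢ (nhdsWithin (0 : ℝ) (Set.Ioi 0)) with hF
  set Ep : ℝ → ℝ := fun h =>
    ((wpeA (V x₀ - V (x₀ + h)) * ((ρ (x₀ + h) - ρ x₀) / h)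
        + ρ x₀ * ((V (x₀ + h) - V x₀) / h)) - L) / h - M / 2 with hEp
  set Em : ℝ → ℝ := fun h =>
    ((wpeA (V x₀ - V (x₀ - h)) * ((ρ x₀ - ρ (x₀ - h)) / h)
        + ρ x₀ * ((V x₀ - V (x₀ - h)) / h)) - L) / h + M / 2 with hEm
  have hEp0 : Tendsto Ep (nhdsWithin 0 (Set.Ioi 0)) (nhds 0) := by
    have := (sideP ρ V hρ hV x₀).sub (tendsto_const_nhds (x := M / 2))
    simpa [hEp, hL, hM, sub_self] using this
  have hEm0 : Tendsto Em (nhdsWithin 0 (Set.Ioi 0)) (nhds 0) := by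
    have := (sideM ρ V hρ hV x₀).add (tendsto_const_nhds (x := M / 2))
    simpa [hEm, hL, hM] using this
  have hpos : ∀ᶠ p : ℝ × ℝ in F, 0 < p.1 ∧ 0 < p.2 := by
    apply eventually_of_mem (prod_mem_prod self_mem_nhdsWithin self_mem_nhdsWithin)
    intro p hp
    exact ⟨hp.1, hp.2⟩
  -- error terms tend to zero
  have hr2 : Tendsto (fun p : ℝ × ℝ => 2 * p.2 / (p.1 + p.2) * Ep p.2) F (nhds 0) := by
    apply squeeze_zero_norm' (a := fun p : ℝ × ℝ => 2 * |Ep p.2|)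
    · filter_upwards [hpos] with p hp
      rw [Real.norm_eq_abs, abs_mul]
      have h1 : |2 * p.2 / (p.1 + p.2)| ≤ 2 := by
        rw [abs_div, abs_of_pos (by linarith : (0:ℝ) < p.1 + p.2),
          abs_of_pos (by linarith : (0:ℝ) < 2 * p.2)]
        rw [div_le_iff₀ (by linarith : (0:ℝ) < p.1 + p.2)]
        linarith
      exact mul_le_mul_of_nonneg_right h1 (abs_nonneg _)
    · have h1 : Tendsto (fun p : ℝ × ℝ => Ep p.2) F (nhds 0) :=
        hEp0.comp tendsto_snd
      have := (h1.abs).const_mul 2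
      simpa using this
  have hr1 : Tendsto (fun p : ℝ × ℝ => 2 * p.1 / (p.1 + p.2) * Em p.1) F (nhds 0) := by
    apply squeeze_zero_norm' (a := fun p : ℝ × ℝ => 2 * |Em p.1|)
    · filter_upwards [hpos] with p hp
      rw [Real.norm_eq_abs, abs_mul]
      have h1 : |2 * p.1 / (p.1 + p.2)| ≤ 2 := by
        rw [abs_div, abs_of_pos (by linarith : (0:ℝ) < p.1 + p.2),
          abs_of_pos (by linarith : (0:ℝ) < 2 * p.1)]
        rw [div_le_iff₀ (by linarith : (0:ℝ) < p.1 + p.2)]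
        linarith
      exact mul_le_mul_of_nonneg_right h1 (abs_nonneg _)
    · have h1 : Tendsto (fun p : ℝ × ℝ => Em p.1) F (nhds 0) :=
        hEm0.comp tendsto_fst
      have := (h1.abs).const_mul 2
      simpa using this
  have hfinal : Tendsto (fun p : ℝ × ℝ =>
      D * M + D * (2 * p.2 / (p.1 + p.2) * Ep p.2) - D * (2 * p.1 / (p.1 + p.2) * Em p.1))
      F (nhds (D * M)) := by
    have := (tendsto_const_nhds (x := D * M) (f := F)).add (hr2.const_mul D)
      |>.sub (hr1.const_mul D)
    simpa using this
  apply hfinal.congr'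
  filter_upwards [hpos] with p hp
  obtain ⟨h1, h2⟩ := hp
  have h10 : p.1 ≠ 0 := ne_of_gt h1
  have h20 : p.2 ≠ 0 := ne_of_gt h2
  have h120 : p.1 + p.2 ≠ 0 := by positivity
  -- rewrite the two "wrong-sign" wpeA applications
  have e1 : wpeA (V (x₀ + p.2) - V x₀) = wpeA (V x₀ - V (x₀ + p.2)) + (V x₀ - V (x₀ + p.2)) := by
    rw [show V (x₀ + p.2) - V x₀ = -(V x₀ - V (x₀ + p.2)) from by ring, wpeA_neg]
  have e2 : wpeA (V (x₀ - p.1) - V x₀) = wpeA (V x₀ - V (x₀ - p.1)) + (V x₀ - V (x₀ - p.1)) := by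
    rw [show V (x₀ - p.1) - V x₀ = -(V x₀ - V (x₀ - p.1)) from by ring, wpeA_neg]
  rw [hEp, hEm]
  simp only [e1, e2]
  field_simp
  ring
end
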